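/- Let Λ > 0. For every A > 0 and every real 𝒥 ≠ 0 there exists a unique ∈ (0, π²/√(2Λ³)] such that, setting 𝒥̂ = (𝒥/A²)·Â², equality holds in the relation Λ³Â⁶/(2¹⁰π⁶𝒥̂²) = (Â·√(Â² + 512π²𝒥̂²) − Â² − 128π²𝒥̂²)³ / (Â − √(Â² + 512π²𝒥̂²))⁴. Moreover, the inequality Λ³A⁶/(2¹⁰π⁶𝒥²) ≤ (A·√(A² + 512π²𝒥²) − A² − 128π²𝒥²)³ / (A − √(A² + 512π²𝒥²))⁴ holds if and only if A ≤ Â. -/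

import Mathlib

open Real

/-- Left-hand side of the CCLP area–angular momentum relation. -/
noncomputable def cclpLHS (Λ A J : ℝ) : ℝ :=
  Λ ^ 3 * A ^ 6 / (2 ^ 10 * π ^ 6 * J ^ 2)

/-- Right-hand side of the CCLP area–angular momentum relation. -/
noncomputable def cclpRHS (A J : ℝ) : ℝ :=
  (A * Real.sqrt (A ^ 2 + 512 * π ^ 2 * J ^ 2) - A ^ 2 - 128 * π ^ 2 * J ^ 2) ^ 3 /
    (A - Real.sqrt (A ^ 2 + 512 * π ^ 2 * J ^ 2)) ^ 4

/-- Auxiliary function whose sign controls the CCLP relation along the scaling curve. -/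
noncomputable def gfun (Λ j t : ℝ) : ℝ :=
  32 * Λ ^ 3 * t ^ 2 +
    π ^ 4 * ((Real.sqrt (1 + 512 * π ^ 2 * j ^ 2 * t ^ 2) + 1) *
      (Real.sqrt (1 + 512 * π ^ 2 * j ^ 2 * t ^ 2) - 3) ^ 3)

lemma gfun_continuous (Λ j : ℝ) : Continuous (gfun Λ j) := by
  unfold gfun; fun_prop

lemma hmono_aux {a b : ℝ} (ha : 1 ≤ a) (hab : a ≤ b) :
    (a+1)*(a-3)^3 ≤ (b+1)*(b-3)^3 := by
  nlinarith [mul_nonneg (sub_nonneg.mpr hab) (sq_nonneg (a-3)),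
    mul_nonneg (sub_nonneg.mpr hab) (sq_nonneg (b-3)),
    mul_nonneg (sub_nonneg.mpr hab) (sq_nonneg (a+b-6)),
    mul_nonneg (mul_nonneg (sub_nonneg.mpr hab) (sub_nonneg.mpr ha)) (sq_nonneg (b-3)),
    mul_nonneg (mul_nonneg (sub_nonneg.mpr hab) (sub_nonneg.mpr ha)) (sq_nonneg (a-3)),
    sq_nonneg (a-b), sq_nonneg (a+b-6)]

lemma hlow_aux {u : ℝ} (hu : 1 < u) : -16 < (u+1)*(u-3)^3 := by
  nlinarith [sq_nonneg (u - 1 - 8/3), mul_pos (sub_pos.mpr hu) (sub_pos.mpr hu),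
    sq_nonneg (u-1), mul_pos (mul_pos (sub_pos.mpr hu) (sub_pos.mpr hu)) (sub_pos.mpr hu),
    mul_nonneg (sub_pos.mpr hu).le (sq_nonneg (u-1-8/3))]

lemma sqrt_one_le (j t : ℝ) : 1 ≤ Real.sqrt (1 + 512 * π ^ 2 * j ^ 2 * t ^ 2) := by
  have h0 : (0:ℝ) ≤ 512 * π ^ 2 * j ^ 2 * t ^ 2 := by positivity
  have h := Real.sqrt_le_sqrt (by linarith : (1:ℝ) ≤ 1 + 512 * π ^ 2 * j ^ 2 * t ^ 2)
  simpa using h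

lemma sqrt_one_lt {j t : ℝ} (hj : j ≠ 0) (ht : t ≠ 0) :
    1 < Real.sqrt (1 + 512 * π ^ 2 * j ^ 2 * t ^ 2) := by
  have h1 : (1:ℝ) < 1 + 512 * π ^ 2 * j ^ 2 * t ^ 2 := by
    have : 0 < 512 * π ^ 2 * j ^ 2 * t ^ 2 := by positivity
    linarith
  calc (1:ℝ) = Real.sqrt 1 := (Real.sqrt_one).symm
  _ < _ := Real.sqrt_lt_sqrt (by norm_num) h1

/-- Strict monotonicity of `gfun` on `[0, ∞)`. -/
lemma gfun_strictMono (Λ j : ℝ) (hΛ : 0 < Λ) {s t : ℝ} (hs : 0 ≤ s) (hst : s < t) :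
    gfun Λ j s < gfun Λ j t := by
  have hπ := pi_pos
  unfold gfun
  set a := Real.sqrt (1 + 512 * π ^ 2 * j ^ 2 * s ^ 2) with hadef
  set b := Real.sqrt (1 + 512 * π ^ 2 * j ^ 2 * t ^ 2) with hbdef
  have ha1 : 1 ≤ a := sqrt_one_le j s
  have hab : a ≤ b := by
    apply Real.sqrt_le_sqrt
    have h2 : s ^ 2 ≤ t ^ 2 := by nlinarith
    have := mul_le_mul_of_nonneg_left h2
      (by positivity : (0:ℝ) ≤ 512 * π ^ 2 * j ^ 2)
    linarith
  have hterm : (a+1)*(a-3)^3 ≤ (b+1)*(b-3)^3 := hmono_aux ha1 hab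
  have hsq : s ^ 2 < t ^ 2 := by nlinarith
  have hπ4 : (0:ℝ) < π ^ 4 := by positivity
  nlinarith [pow_pos hΛ 3]

/-- Key identity: difference of the two sides along the curve equals a positive
multiple of `gfun`. -/
lemma key (Λ j t : ℝ) (hj : j ≠ 0) (ht : 0 < t) :
    cclpLHS Λ t (j * t ^ 2) - cclpRHS t (j * t ^ 2) =
      gfun Λ j t / (32768 * π ^ 6 * j ^ 2) := by
  have hπ := pi_pos
  set u := Real.sqrt (1 + 512 * π ^ 2 * j ^ 2 * t ^ 2) with hu
  have harg : (0:ℝ) ≤ 1 + 512 * π ^ 2 * j ^ 2 * t ^ 2 := by positivity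
  have hu2 : u ^ 2 = 1 + 512 * π ^ 2 * j ^ 2 * t ^ 2 := Real.sq_sqrt harg
  have hu1 : 1 < u := sqrt_one_lt hj ht.ne'
  have ht0 : t ≠ 0 := ht.ne'
  have hum1 : u - 1 ≠ 0 := by linarith
  have hsqrt : Real.sqrt (t ^ 2 + 512 * π ^ 2 * (j * t ^ 2) ^ 2) = t * u := by
    rw [show t ^ 2 + 512 * π ^ 2 * (j * t ^ 2) ^ 2
        = t ^ 2 * (1 + 512 * π ^ 2 * j ^ 2 * t ^ 2) by ring,
      Real.sqrt_mul (sq_nonneg t), Real.sqrt_sq ht.le, hu]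
  have hRHS : cclpRHS t (j * t ^ 2) = -(t ^ 2 * (u - 3) ^ 3) / (64 * (u - 1)) := by
    unfold cclpRHS
    rw [hsqrt]
    rw [show 128 * π ^ 2 * (j * t ^ 2) ^ 2 = (u ^ 2 - 1) * t ^ 2 / 4 by rw [hu2]; ring]
    have hden : t - t * u ≠ 0 := by
      intro h; apply ht0; nlinarith
    have h1u : 1 - u ≠ 0 := fun h => hum1 (by linarith)
    field_simp
    ring
  have hLHS : cclpLHS Λ t (j * t ^ 2) = Λ ^ 3 * t ^ 2 / (1024 * π ^ 6 * j ^ 2) := by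
    unfold cclpLHS
    rw [show (2:ℝ) ^ 10 * π ^ 6 * (j * t ^ 2) ^ 2 = 1024 * π ^ 6 * j ^ 2 * t ^ 4 by ring]
    field_simp
  have hj2 : j ^ 2 = (u ^ 2 - 1) / (512 * π ^ 2 * t ^ 2) := by
    rw [hu2]; field_simp; ring
  rw [hLHS, hRHS]
  unfold gfun
  rw [← hu, hj2]
  have hup1 : u + 1 ≠ 0 := by nlinarith
  have : u ^ 2 - 1 ≠ 0 := by
    intro h; apply hum1; nlinarith
  field_simp
  ring

/-- Lemma 7.1(a): existence and uniqueness of `Â ∈ (0, π²/√(2Λ³)]` saturating the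
CCLP relation along the curve `τ ↦ (τ, 𝒥τ²/A²)`, and the inequality holds iff `A ≤ Â`. -/
theorem stmt0 (Λ A J : ℝ) (hΛ : 0 < Λ) (hA : 0 < A) (hJ : J ≠ 0) :
    ∃ Ahat : ℝ, (0 < Ahat ∧ Ahat ≤ π ^ 2 / Real.sqrt (2 * Λ ^ 3)) ∧
      cclpLHS Λ Ahat (J / A ^ 2 * Ahat ^ 2) = cclpRHS Ahat (J / A ^ 2 * Ahat ^ 2) ∧
      (∀ A' : ℝ, 0 < A' → A' ≤ π ^ 2 / Real.sqrt (2 * Λ ^ 3) →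
        cclpLHS Λ A' (J / A ^ 2 * A' ^ 2) = cclpRHS A' (J / A ^ 2 * A' ^ 2) → A' = Ahat) ∧
      (cclpLHS Λ A J ≤ cclpRHS A J ↔ A ≤ Ahat) := by
  have hπ := pi_pos
  set j := J / A ^ 2 with hjdef
  have hj : j ≠ 0 := div_ne_zero hJ (by positivity)
  set B := π ^ 2 / Real.sqrt (2 * Λ ^ 3) with hBdef
  have hsΛ : (0:ℝ) < Real.sqrt (2 * Λ ^ 3) := Real.sqrt_pos.mpr (by positivity)
  have hBpos : 0 < B := by rw [hBdef]; positivity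
  have hB2 : B ^ 2 = π ^ 4 / (2 * Λ ^ 3) := by
    rw [hBdef, div_pow, Real.sq_sqrt (by positivity : (0:ℝ) ≤ 2 * Λ ^ 3)]
    ring
  have hdivpos : (0:ℝ) < 32768 * π ^ 6 * j ^ 2 := by positivity
  -- g(0) < 0
  have hg0 : gfun Λ j 0 < 0 := by
    unfold gfun
    norm_num [Real.sqrt_one]
    nlinarith [pow_pos hπ 4]
  -- g(B) > 0
  have hgB : 0 < gfun Λ j B := by
    unfold gfun
    have hu1 : 1 < Real.sqrt (1 + 512 * π ^ 2 * j ^ 2 * B ^ 2) :=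
      sqrt_one_lt hj hBpos.ne'
    have h16 := hlow_aux hu1
    have hBeq : 32 * Λ ^ 3 * B ^ 2 = 16 * π ^ 4 := by
      rw [hB2]; field_simp; ring
    nlinarith [pow_pos hπ 4]
  -- find the root by IVT
  obtain ⟨Ahat, hmem, hgA⟩ : ∃ x ∈ Set.Ioo (0:ℝ) B, gfun Λ j x = 0 := by
    have hc : ContinuousOn (gfun Λ j) (Set.Icc 0 B) :=
      (gfun_continuous Λ j).continuousOn
    have hIVT := intermediate_value_Ioo hBpos.le hc
    have h0 : (0:ℝ) ∈ Set.Ioo (gfun Λ j 0) (gfun Λ j B) := ⟨hg0, hgB⟩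
    obtain ⟨x, hx, hgx⟩ := hIVT h0
    exact ⟨x, hx, hgx⟩
  obtain ⟨hA1, hA2⟩ := hmem
  -- sign of g at a point t>0 controls the relation at (t, j t²)
  have hsign : ∀ t : ℝ, 0 < t →
      (cclpLHS Λ t (j * t ^ 2) ≤ cclpRHS t (j * t ^ 2) ↔ gfun Λ j t ≤ 0) := by
    intro t ht
    have hk := key Λ j t hj ht
    constructor
    · intro h
      have : gfun Λ j t / (32768 * π ^ 6 * j ^ 2) ≤ 0 := by rw [← hk]; linarith
      have hg := mul_nonpos_of_nonpos_of_nonneg this hdivpos.le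
      rwa [div_mul_cancel₀ _ hdivpos.ne'] at hg
    · intro h
      have : gfun Λ j t / (32768 * π ^ 6 * j ^ 2) ≤ 0 :=
        div_nonpos_of_nonpos_of_nonneg h hdivpos.le
      linarith [hk ▸ this]
  have heqsign : ∀ t : ℝ, 0 < t →
      (cclpLHS Λ t (j * t ^ 2) = cclpRHS t (j * t ^ 2) ↔ gfun Λ j t = 0) := by
    intro t ht
    have hk := key Λ j t hj ht
    constructor
    · intro h
      rw [h, sub_self] at hk
      field_simp at hk
      exact hk.symm.trans (by ring)
    · intro h
      rw [h] at hk
      simp at hk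
      linarith
  refine ⟨Ahat, ⟨hA1, hA2.le⟩, ?_, ?_, ?_⟩
  · exact (heqsign Ahat hA1).mpr hgA
  · intro A' hA'1 hA'2 heq
    have hg' : gfun Λ j A' = 0 := (heqsign A' hA'1).mp heq
    rcases lt_trichotomy A' Ahat with h | h | h
    · exact absurd (gfun_strictMono Λ j hΛ hA'1.le h) (by rw [hg', hgA]; exact lt_irrefl 0)
    · exact h
    · exact absurd (gfun_strictMono Λ j hΛ hA1.le h) (by rw [hg', hgA]; exact lt_irrefl 0)
  · have hJeq : J = j * A ^ 2 := by rw [hjdef]; field_simp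
    rw [hJeq]
    rw [hsign A hA]
    constructor
    · intro h
      by_contra hlt
      push_neg at hlt
      have := gfun_strictMono Λ j hΛ hA1.le hlt
      rw [hgA] at this
      linarith
    · intro h
      rcases lt_or_eq_of_le h with h | h
      · have := gfun_strictMono Λ j hΛ hA.le h
        rw [hgA] at this
        linarith
      · rw [h, hgA]
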